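/- Let θ_i and θ_j be two real algebraic functions analytic on (a, ∞) such that |θ_i(x) − θ_j(x)| < 2c₀·e^{−3x} for all sufficiently large x, where c₀ > 0. Then θ_i = θ_j on (a', ∞) for some a' ≥ a. -/

import Mathlib

open Filter Polynomial

/-- polynomial times exp(-3x) tends to 0 -/
private lemma poly_exp_tendsto (r : Polynomial ℝ) :
    Tendsto (fun x => Polynomial.eval x r * Real.exp (-3 * x)) atTop (nhds 0) := by
  induction r using Polynomial.induction_on' with
  | add p q hp hq =>
      have := hp.add hq
      simp only [Polynomial.eval_add, add_zero] at this ⊢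
      convert this using 2 with x
      ring
  | monomial n a =>
      have h3 : Tendsto (fun x : ℝ => 3 * x) atTop atTop :=
        Tendsto.const_mul_atTop (by norm_num) tendsto_id
      have h := ((Real.tendsto_pow_mul_exp_neg_atTop_nhds_zero n).comp h3).const_mul (a / 3 ^ n)
      simp only [mul_zero] at h
      convert h using 2 with x
      simp only [Function.comp_def, Polynomial.eval_monomial]
      have h3n : (3 : ℝ) ^ n ≠ 0 := by positivity
      rw [show -3 * x = -(3 * x) by ring]
      field_simp
      ring

/-- a nonzero real polynomial is eventually bounded below in absolute value -/
private lemma poly_lower {r : Polynomial ℝ} (hr : r ≠ 0) :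
    ∃ ε > 0, ∀ᶠ x in atTop, ε ≤ |Polynomial.eval x r| := by
  by_cases hd : 0 < r.degree
  · exact ⟨1, one_pos, (Polynomial.abs_tendsto_atTop r hd).eventually_ge_atTop 1⟩
  · push_neg at hd
    obtain ⟨c, rfl⟩ : ∃ c, r = Polynomial.C c := ⟨r.coeff 0, (Polynomial.eq_C_of_degree_le_zero hd)⟩
    have hc : c ≠ 0 := fun h => hr (by rw [h, map_zero])
    exact ⟨|c|, abs_pos.mpr hc, Filter.Eventually.of_forall fun x => by simp⟩

/-- factor out powers of X -/
private lemma factor_X : ∀ (n : ℕ) (p : Polynomial (Polynomial ℝ)), p.natDegree ≤ n → p ≠ 0 →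
    ∃ m q, p = Polynomial.X ^ m * q ∧ q.coeff 0 ≠ 0 := by
  intro n
  induction n with
  | zero =>
      intro p hdeg hp
      refine ⟨0, p, by simp, ?_⟩
      intro h0
      obtain ⟨t, rfl⟩ := Polynomial.X_dvd_iff.mpr h0
      have ht : t ≠ 0 := right_ne_zero_of_mul hp
      have := Polynomial.natDegree_mul (Polynomial.X_ne_zero (R := Polynomial ℝ)) ht
      simp only [Polynomial.natDegree_X] at this
      omega
  | succ n ih =>
      intro p hdeg hp
      by_cases h0 : p.coeff 0 ≠ 0
      · exact ⟨0, p, by simp, h0⟩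
      · push_neg at h0
        obtain ⟨t, rfl⟩ := Polynomial.X_dvd_iff.mpr h0
        have ht : t ≠ 0 := right_ne_zero_of_mul hp
        have hdt : t.natDegree ≤ n := by
          have := Polynomial.natDegree_mul (Polynomial.X_ne_zero (R := Polynomial ℝ)) ht
          simp only [Polynomial.natDegree_X] at this
          omega
        obtain ⟨m, q, rfl, hq0⟩ := ih t hdt ht
        exact ⟨m + 1, q, by ring, hq0⟩

/-- A function satisfying a nonzero two-variable polynomial relation pointwise
    (eventually) and decaying superpolynomially is eventually zero. -/
private lemma lemA (q : Polynomial (Polynomial ℝ)) (hq : q ≠ 0) (g : ℝ → ℝ)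
    (hrel : ∀ᶠ x in atTop, Polynomial.eval (g x) (q.map (Polynomial.evalRingHom x)) = 0)
    (hdec : ∀ r : Polynomial ℝ, Tendsto (fun x => g x * Polynomial.eval x r) atTop (nhds 0)) :
    ∀ᶠ x in atTop, g x = 0 := by
  obtain ⟨m, q', rfl, h0⟩ := factor_X q.natDegree q le_rfl hq
  by_contra hcon
  rw [Filter.not_eventually] at hcon
  set n := q'.natDegree with hn
  obtain ⟨ε, hε, hlow⟩ := poly_lower h0
  have hF : Tendsto (fun x => ∑ i ∈ Finset.range n, |g x * Polynomial.eval x (q'.coeff (i + 1))|)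
      atTop (nhds 0) := by
    have := tendsto_finset_sum (Finset.range n)
      (fun i (_ : i ∈ Finset.range n) => ((hdec (q'.coeff (i + 1))).abs))
    simpa using this
  have hg0 : Tendsto g atTop (nhds 0) := by simpa using hdec 1
  have hgabs : Tendsto (fun x => |g x|) atTop (nhds 0) := by simpa using hg0.abs
  have hgsmall : ∀ᶠ x in atTop, |g x| ≤ 1 := hgabs.eventually_le_const one_pos
  have hFsmall : ∀ᶠ x in atTop, (∑ i ∈ Finset.range n,
      |g x * Polynomial.eval x (q'.coeff (i + 1))|) < ε := hF.eventually_lt_const hε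
  have hev := hrel.and (hgsmall.and (hlow.and hFsmall))
  obtain ⟨x, hgx, hrelx, hg1, hlowx, hFx⟩ := (hcon.and_eventually hev).exists
  have hq'x : Polynomial.eval (g x) (q'.map (Polynomial.evalRingHom x)) = 0 := by
    rw [Polynomial.map_mul, Polynomial.map_pow, Polynomial.map_X, Polynomial.eval_mul,
      Polynomial.eval_pow, Polynomial.eval_X] at hrelx
    exact (mul_eq_zero.mp hrelx).resolve_left (pow_ne_zero m hgx)
  have hdeg : (q'.map (Polynomial.evalRingHom x)).natDegree < n + 1 :=
    lt_of_le_of_lt (Polynomial.natDegree_map_le) (Nat.lt_succ_self n)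
  rw [Polynomial.eval_eq_sum_range' hdeg, Finset.sum_range_succ'] at hq'x
  simp only [Polynomial.coeff_map, Polynomial.coe_evalRingHom, pow_zero, mul_one] at hq'x
  have heq : Polynomial.eval x (q'.coeff 0)
      = -∑ i ∈ Finset.range n, Polynomial.eval x (q'.coeff (i + 1)) * g x ^ (i + 1) := by
    linarith [hq'x]
  have hb : |Polynomial.eval x (q'.coeff 0)|
      ≤ ∑ i ∈ Finset.range n, |g x * Polynomial.eval x (q'.coeff (i + 1))| := by
    rw [heq, abs_neg]
    refine (Finset.abs_sum_le_sum_abs _ _).trans (Finset.sum_le_sum ?_)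
    intro i _
    rw [abs_mul, abs_pow, abs_mul]
    have hpow : |g x| ^ (i + 1) ≤ |g x| := by
      calc |g x| ^ (i + 1) ≤ |g x| ^ 1 :=
            pow_le_pow_of_le_one (abs_nonneg _) hg1 (by omega)
        _ = |g x| := pow_one _
    calc |Polynomial.eval x (q'.coeff (i + 1))| * |g x| ^ (i + 1)
        ≤ |Polynomial.eval x (q'.coeff (i + 1))| * |g x| :=
          mul_le_mul_of_nonneg_left hpow (abs_nonneg _)
      _ = |g x| * |Polynomial.eval x (q'.coeff (i + 1))| := mul_comm _ _
  linarith

/-- evaluation homomorphism into the germ ring at `atTop` -/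
noncomputable def germE : Polynomial ℝ →+* Filter.Germ (atTop : Filter ℝ) ℝ :=
  (Filter.Germ.coeRingHom _).comp (Pi.ringHom fun x : ℝ => Polynomial.evalRingHom x)

private lemma germ_eval₂ (f : ℝ → ℝ) (Q : Polynomial (Polynomial ℝ)) :
    Polynomial.eval₂ germE (↑f : Filter.Germ (atTop : Filter ℝ) ℝ) Q
      = ↑(fun x => Polynomial.eval (f x) (Q.map (Polynomial.evalRingHom x))) := by
  induction Q using Polynomial.induction_on' with
  | add p q hp hq =>
      rw [Polynomial.eval₂_add, hp, hq]
      have : (fun x => Polynomial.eval (f x) ((p + q).map (Polynomial.evalRingHom x)))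
          = (fun x => Polynomial.eval (f x) (p.map (Polynomial.evalRingHom x)))
            + (fun x => Polynomial.eval (f x) (q.map (Polynomial.evalRingHom x))) := by
        funext x
        simp [Polynomial.map_add]
      rw [this, Filter.Germ.coe_add]
  | monomial k r =>
      rw [Polynomial.eval₂_monomial]
      have : (fun x => Polynomial.eval (f x) ((Polynomial.monomial k r).map
            (Polynomial.evalRingHom x)))
          = (fun x : ℝ => Polynomial.eval x r) * f ^ k := by
        funext x
        simp [Polynomial.map_monomial, Polynomial.eval_monomial]
      rw [this, Filter.Germ.coe_mul, Filter.Germ.coe_pow]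
      rfl

/-- the conversion of one-variable mv-polynomials to polynomials -/
noncomputable def e1 : MvPolynomial (Fin 1) ℝ ≃+* Polynomial ℝ :=
  (MvPolynomial.finSuccEquiv ℝ 0).toRingEquiv.trans
    (Polynomial.mapEquiv (MvPolynomial.isEmptyRingEquiv ℝ (Fin 0)))

private lemma e1_eval (x : ℝ) :
    (Polynomial.evalRingHom x).comp (e1 : MvPolynomial (Fin 1) ℝ →+* Polynomial ℝ)
      = (MvPolynomial.eval fun _ : Fin 1 => x) := by
  apply MvPolynomial.ringHom_ext
  · intro c
    simp [e1, Polynomial.mapEquiv, MvPolynomial.finSuccEquiv_apply, MvPolynomial.eval₂Hom_C,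
      MvPolynomial.isEmptyRingEquiv, MvPolynomial.isEmptyAlgEquiv]
    exact MvPolynomial.coeff_zero_C c
  · intro i
    have hi : i = 0 := Subsingleton.elim _ _
    subst hi
    simp [e1, MvPolynomial.finSuccEquiv_X_zero, Polynomial.mapEquiv]

/-- conversion of a two-variable mv-polynomial to an iterated polynomial with
    the second variable outermost -/
noncomputable def Qof (P : MvPolynomial (Fin 2) ℝ) : Polynomial (Polynomial ℝ) :=
  ((MvPolynomial.finSuccEquiv ℝ 1) (MvPolynomial.rename (Equiv.swap 0 1) P)).map
    (e1 : MvPolynomial (Fin 1) ℝ →+* Polynomial ℝ)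

private lemma Qof_ne_zero {P : MvPolynomial (Fin 2) ℝ} (hP : P ≠ 0) : Qof P ≠ 0 := by
  intro h
  apply hP
  rw [Qof] at h
  have h1 : (MvPolynomial.finSuccEquiv ℝ 1) (MvPolynomial.rename (Equiv.swap 0 1) P) = 0 :=
    Polynomial.map_injective (e1 : MvPolynomial (Fin 1) ℝ →+* Polynomial ℝ)
      e1.injective (by rw [h, Polynomial.map_zero])
  have h2 : MvPolynomial.rename (Equiv.swap 0 1) P = 0 :=
    (MvPolynomial.finSuccEquiv ℝ 1).injective (by rw [h1, map_zero])
  have h3 : MvPolynomial.rename (Equiv.swap 0 1) P = MvPolynomial.rename (Equiv.swap 0 1) 0 := by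
    rw [h2, map_zero]
  exact (MvPolynomial.rename_injective _ (Equiv.swap 0 1).injective) h3

private lemma eval_Qof (P : MvPolynomial (Fin 2) ℝ) (x y : ℝ) :
    Polynomial.eval y ((Qof P).map (Polynomial.evalRingHom x))
      = MvPolynomial.eval (fun k : Fin 2 => if k = 0 then x else y) P := by
  rw [Qof, Polynomial.map_map, e1_eval]
  rw [← MvPolynomial.eval_eq_eval_mv_eval' (fun _ : Fin 1 => x) y]
  rw [MvPolynomial.eval_rename]
  have : ((Fin.cons y fun _ : Fin 1 => x) ∘ (Equiv.swap 0 1))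
      = fun k : Fin 2 => if k = 0 then x else y := by
    funext k
    fin_cases k <;> simp [Equiv.swap_apply_left, Equiv.swap_apply_right]
  rw [this]

/-- Two real algebraic functions analytic on (a,∞) which are exponentially
    close (|θᵢ(x) − θⱼ(x)| < 2c₀ e^{−3x} for all sufficiently large x)
    eventually coincide. -/
theorem algebraic_close_eventually_equal (a : ℝ) (θi θj : ℝ → ℝ)
    (hθi : AnalyticOn ℝ θi (Set.Ioi a)) (hθj : AnalyticOn ℝ θj (Set.Ioi a))
    (Pi : MvPolynomial (Fin 2) ℝ) (hPi : Pi ≠ 0)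
    (halgi : ∀ x > a, MvPolynomial.eval (fun k : Fin 2 => if k = 0 then x else θi x) Pi = 0)
    (Pj : MvPolynomial (Fin 2) ℝ) (hPj : Pj ≠ 0)
    (halgj : ∀ x > a, MvPolynomial.eval (fun k : Fin 2 => if k = 0 then x else θj x) Pj = 0)
    (c₀ : ℝ) (hc₀ : 0 < c₀)
    (hclose : ∃ x₀, ∀ x, x₀ ≤ x → x > a → |θi x - θj x| < 2 * c₀ * Real.exp (-3 * x)) :
    ∃ a', a ≤ a' ∧ ∀ x > a', θi x = θj x := by
  classical
  letI : Algebra (Polynomial ℝ) (Filter.Germ (atTop : Filter ℝ) ℝ) := germE.toAlgebra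
  have halgmap : algebraMap (Polynomial ℝ) (Filter.Germ (atTop : Filter ℝ) ℝ) = germE := rfl
  -- injectivity condition
  have hinj : ∀ r : Polynomial ℝ,
      algebraMap (Polynomial ℝ) (Filter.Germ (atTop : Filter ℝ) ℝ) r = 0 → r = 0 := by
    intro r hr
    rw [halgmap] at hr
    have : (fun x : ℝ => Polynomial.eval x r) =ᶠ[atTop] (0 : ℝ → ℝ) :=
      Filter.Germ.coe_eq.mp hr
    obtain ⟨x₀, hx₀⟩ := Filter.eventually_atTop.mp this
    apply Polynomial.eq_zero_of_infinite_isRoot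
    apply Set.Infinite.mono (s := Set.Ici x₀)
    · exact fun x hx => hx₀ x hx
    · exact Set.Ici_infinite x₀
  -- algebraicity of the germs
  have key : ∀ (θ : ℝ → ℝ) (P : MvPolynomial (Fin 2) ℝ), P ≠ 0 →
      (∀ x > a, MvPolynomial.eval (fun k : Fin 2 => if k = 0 then x else θ x) P = 0) →
      IsAlgebraic (Polynomial ℝ) (↑θ : Filter.Germ (atTop : Filter ℝ) ℝ) := by
    intro θ P hP halg
    refine ⟨Qof P, Qof_ne_zero hP, ?_⟩
    rw [Polynomial.aeval_def, halgmap, germ_eval₂]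
    have : (fun x => Polynomial.eval (θ x) ((Qof P).map (Polynomial.evalRingHom x)))
        =ᶠ[atTop] (0 : ℝ → ℝ) := by
      filter_upwards [Filter.eventually_gt_atTop a] with x hx
      rw [eval_Qof]
      exact halg x hx
    exact Filter.Germ.coe_eq.mpr this
  obtain ⟨ci, hci0, hinti⟩ := (key θi Pi hPi halgi).exists_integral_multiple
  obtain ⟨zi, hzi⟩ : ∃ zi : integralClosure (Polynomial ℝ) (Filter.Germ (atTop : Filter ℝ) ℝ),
      algebraMap (Polynomial ℝ) _ ci * (↑θi : Filter.Germ (atTop : Filter ℝ) ℝ) = zi :=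
    ⟨⟨_, hinti⟩, (Algebra.smul_def _ _).symm⟩
  obtain ⟨cj, hcj0, hintj⟩ := (key θj Pj hPj halgj).exists_integral_multiple
  obtain ⟨zj, hzj⟩ : ∃ zj : integralClosure (Polynomial ℝ) (Filter.Germ (atTop : Filter ℝ) ℝ),
      algebraMap (Polynomial ℝ) _ cj * (↑θj : Filter.Germ (atTop : Filter ℝ) ℝ) = zj :=
    ⟨⟨_, hintj⟩, (Algebra.smul_def _ _).symm⟩
  set g : ℝ → ℝ := fun x => Polynomial.eval x (ci * cj) * (θi x - θj x) with hg
  -- the germ of g is integral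
  have hu : (↑g : Filter.Germ (atTop : Filter ℝ) ℝ)
      = germE cj * (zi : Filter.Germ (atTop : Filter ℝ) ℝ)
        - germE ci * (zj : Filter.Germ (atTop : Filter ℝ) ℝ) := by
    rw [← hzi, ← hzj, halgmap]
    have h1 : germE cj * (germE ci * (↑θi : Filter.Germ (atTop : Filter ℝ) ℝ))
        - germE ci * (germE cj * (↑θj : Filter.Germ (atTop : Filter ℝ) ℝ))
        = ↑((fun x : ℝ => Polynomial.eval x cj) * ((fun x : ℝ => Polynomial.eval x ci) * θi)
            - (fun x : ℝ => Polynomial.eval x ci) * ((fun x : ℝ => Polynomial.eval x cj) * θj)) := by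
      rw [Filter.Germ.coe_sub, Filter.Germ.coe_mul, Filter.Germ.coe_mul,
        Filter.Germ.coe_mul, Filter.Germ.coe_mul]
      rfl
    rw [h1]
    apply Filter.Germ.coe_eq.mpr
    apply Filter.Eventually.of_forall
    intro x
    show Polynomial.eval x (ci * cj) * (θi x - θj x)
        = Polynomial.eval x cj * (Polynomial.eval x ci * θi x)
          - Polynomial.eval x ci * (Polynomial.eval x cj * θj x)
    rw [Polynomial.eval_mul]
    ring
  have hint : IsIntegral (Polynomial ℝ) (↑g : Filter.Germ (atTop : Filter ℝ) ℝ) := by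
    rw [hu]
    exact ((isIntegral_algebraMap (x := cj)).mul zi.2).sub ((isIntegral_algebraMap (x := ci)).mul zj.2)
  obtain ⟨p, pmonic, hp⟩ := hint
  -- translate back to an eventual pointwise relation
  have hrel : ∀ᶠ x in atTop, Polynomial.eval (g x) (p.map (Polynomial.evalRingHom x)) = 0 := by
    have hp' : Polynomial.eval₂ germE (↑g : Filter.Germ (atTop : Filter ℝ) ℝ) p = 0 := by
      rw [← halgmap]
      exact hp
    rw [germ_eval₂] at hp'
    exact Filter.Germ.coe_eq.mp hp'
  -- superpolynomial decay of g
  have hclose' : ∀ᶠ x in atTop, |θi x - θj x| < 2 * c₀ * Real.exp (-3 * x) := by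
    obtain ⟨x₀, h⟩ := hclose
    filter_upwards [Filter.eventually_ge_atTop x₀, Filter.eventually_gt_atTop a] with x h1 h2
    exact h x h1 h2
  have hdec : ∀ r : Polynomial ℝ, Tendsto (fun x => g x * Polynomial.eval x r) atTop (nhds 0) := by
    intro r
    have hB : Tendsto (fun x => 2 * c₀ * |Polynomial.eval x (ci * cj * r) * Real.exp (-3 * x)|)
        atTop (nhds 0) := by
      have := ((poly_exp_tendsto (ci * cj * r)).abs).const_mul (2 * c₀)
      simpa using this
    apply squeeze_zero_norm' _ hB
    filter_upwards [hclose'] with x hx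
    have hexp : (0 : ℝ) < Real.exp (-3 * x) := Real.exp_pos _
    have h1 : ‖g x * Polynomial.eval x r‖
        = |Polynomial.eval x (ci * cj * r)| * |θi x - θj x| := by
      simp only [Real.norm_eq_abs, hg, Polynomial.eval_mul, abs_mul]
      ring
    rw [h1]
    have h2 : |Polynomial.eval x (ci * cj * r)| * |θi x - θj x|
        ≤ |Polynomial.eval x (ci * cj * r)| * (2 * c₀ * Real.exp (-3 * x)) :=
      mul_le_mul_of_nonneg_left (le_of_lt hx) (abs_nonneg _)
    refine h2.trans (le_of_eq ?_)
    rw [abs_mul, abs_of_pos hexp]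
    ring
  -- conclude g is eventually zero
  have hgz := lemA p pmonic.ne_zero g hrel hdec
  -- the polynomial multiplier is eventually nonzero
  have hc : ci * cj ≠ 0 := mul_ne_zero hci0 hcj0
  obtain ⟨ε, hε, hlow⟩ := poly_lower hc
  have hfinal : ∀ᶠ x in atTop, θi x = θj x := by
    filter_upwards [hgz, hlow] with x h1 h2
    have hcx : Polynomial.eval x (ci * cj) ≠ 0 := by
      intro h; rw [h] at h2; simp at h2; linarith
    have := (mul_eq_zero.mp h1).resolve_left hcx
    linarith [sub_eq_zero.mp this]
  obtain ⟨x₀, hx₀⟩ := Filter.eventually_atTop.mp hfinal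
  refine ⟨max a x₀, le_max_left _ _, fun x hx => hx₀ x ?_⟩
  exact le_of_lt (lt_of_le_of_lt (le_max_right a x₀) hx)
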